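/- For real numbers X ≥ 1, Y > 0, k ≥ 1, and complex u with real part 0, the difference quotient satisfies |((X+Y)^{(1/k)(1/2+iu)} − X^{(1/k)(1/2+iu)}) / (1/2+iu)| ≪ min( Y X^{1/(2k)−1}, X^{1/(2k)} / (|u|+1) ). -/

import Mathlib

open Complex Real Set

lemma aux_hasDerivAt_cpow {α : ℂ} (hα : α ≠ 0) {t : ℝ} (ht : t ≠ 0) :
    HasDerivAt (fun y : ℝ => (y : ℂ) ^ α) (α * (t : ℂ) ^ (α - 1)) t := by
  have hr : α - 1 ≠ -1 := by
    intro h; apply hα; rw [sub_eq_iff_eq_add] at h; simpa using h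
  have h := (hasDerivAt_ofReal_cpow_const' ht hr).const_mul α
  simp only [sub_add_cancel] at h
  have heq : (fun y : ℝ => α * ((y : ℂ) ^ α / α)) = fun y : ℝ => (y : ℂ) ^ α := by
    funext y; field_simp
  rwa [heq] at h

/-- Bound for the difference quotient of complex powers on the half line. -/
theorem cpow_difference_quotient_bound :
    ∃ C : ℝ, 0 < C ∧ ∀ (X Y : ℝ) (k : ℕ) (u : ℝ),
      1 ≤ X → 0 < Y → Y ≤ X → 1 ≤ k →
      ‖((X + Y : ℂ) ^ ((1 / k : ℂ) * (1 / 2 + u * Complex.I)) -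
          (X : ℂ) ^ ((1 / k : ℂ) * (1 / 2 + u * Complex.I))) /
            (1 / 2 + u * Complex.I)‖
        ≤ C * min (Y * X ^ ((1 : ℝ) / (2 * k) - 1))
            (X ^ ((1 : ℝ) / (2 * k)) / (|u| + 1)) := by
  refine ⟨9, by norm_num, fun X Y k u hX hY hYX hk => ?_⟩
  have hk0 : (0 : ℝ) < k := by exact_mod_cast Nat.lt_of_lt_of_le Nat.zero_lt_one hk
  have hk1 : (1 : ℝ) ≤ k := by exact_mod_cast hk
  have hX0 : (0 : ℝ) < X := lt_of_lt_of_le one_pos hX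
  set s : ℂ := 1 / 2 + u * Complex.I with hs_def
  have hs_re : s.re = 1 / 2 := by simp [hs_def]
  have hs_im : s.im = u := by simp [hs_def]
  have hcast : (1 / (k : ℂ)) = (((1 : ℝ) / k : ℝ) : ℂ) := by push_cast; ring
  set α : ℂ := (1 / k : ℂ) * s with hα_def
  have hα_re : α.re = 1 / (2 * k) := by
    rw [hα_def, hcast, Complex.re_ofReal_mul, hs_re]; field_simp
  have hα_repos : (0 : ℝ) < 1 / (2 * k) := by positivity
  have hα_ne : α ≠ 0 := by
    intro h
    have h0 : α.re = 0 := by rw [h]; simp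
    rw [hα_re] at h0; linarith
  have hα_norm : ‖α‖ = (1 / k) * ‖s‖ := by
    rw [hα_def, hcast, norm_mul, Complex.norm_real, Real.norm_eq_abs,
      abs_of_pos (by positivity)]
  have hs_half : (1 : ℝ) / 2 ≤ ‖s‖ := by
    have h := Complex.abs_re_le_norm s
    rw [hs_re] at h
    calc (1:ℝ)/2 ≤ |(1:ℝ)/2| := le_abs_self _
      _ ≤ ‖s‖ := h
  have hs_u : |u| ≤ ‖s‖ := by
    have h := Complex.abs_im_le_norm s
    rw [hs_im] at h
    exact h
  have hs_pos : (0 : ℝ) < ‖s‖ := lt_of_lt_of_le (by norm_num) hs_half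
  have hre1 : α.re ≤ 1 / 2 := by
    rw [hα_re, div_le_div_iff₀ (by positivity) (by norm_num)]
    nlinarith
  -- MVT bound on the numerator
  have hMVT : ‖((X + Y : ℝ) : ℂ) ^ α - (X : ℂ) ^ α‖ ≤ ‖α‖ * X ^ (α.re - 1) * Y := by
    have hconv : Convex ℝ (Icc X (X + Y)) := convex_Icc _ _
    have hderiv : ∀ t ∈ Icc X (X + Y), HasDerivWithinAt (fun y : ℝ => (y : ℂ) ^ α)
        (α * (t : ℂ) ^ (α - 1)) (Icc X (X + Y)) t := by
      intro t ht
      have ht0 : (0 : ℝ) < t := lt_of_lt_of_le hX0 ht.1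
      exact (aux_hasDerivAt_cpow hα_ne ht0.ne').hasDerivWithinAt
    have hbound : ∀ t ∈ Icc X (X + Y), ‖α * (t : ℂ) ^ (α - 1)‖ ≤ ‖α‖ * X ^ (α.re - 1) := by
      intro t ht
      have ht0 : (0 : ℝ) < t := lt_of_lt_of_le hX0 ht.1
      have hnt : ‖(t : ℂ) ^ (α - 1)‖ = t ^ (α.re - 1) := by
        rw [Complex.norm_cpow_eq_rpow_re_of_pos ht0,
          Complex.sub_re, Complex.one_re]
      rw [norm_mul, hnt]
      exact mul_le_mul_of_nonneg_left
        (Real.rpow_le_rpow_of_nonpos hX0 ht.1 (by linarith)) (norm_nonneg _)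
    have key := hconv.norm_image_sub_le_of_norm_hasDerivWithin_le hderiv hbound
      (Set.left_mem_Icc.2 (by linarith)) (Set.right_mem_Icc.2 (by linarith))
    calc ‖((X + Y : ℝ) : ℂ) ^ α - (X : ℂ) ^ α‖
        ≤ ‖α‖ * X ^ (α.re - 1) * ‖(X + Y) - X‖ := key
      _ = ‖α‖ * X ^ (α.re - 1) * Y := by
          rw [add_sub_cancel_left, Real.norm_eq_abs, abs_of_pos hY]
  -- triangle bound on the numerator
  have htri : ‖((X + Y : ℝ) : ℂ) ^ α - (X : ℂ) ^ α‖ ≤ 3 * X ^ α.re := by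
    have h1 : ‖((X + Y : ℝ) : ℂ) ^ α‖ = (X + Y) ^ α.re := by
      rw [Complex.norm_cpow_eq_rpow_re_of_pos (by linarith)]
    have h2 : ‖(X : ℂ) ^ α‖ = X ^ α.re := by
      rw [Complex.norm_cpow_eq_rpow_re_of_pos hX0]
    have h3 : (X + Y) ^ α.re ≤ 2 * X ^ α.re := by
      calc (X + Y) ^ α.re ≤ (2 * X) ^ α.re := by
            apply Real.rpow_le_rpow (by linarith) (by linarith) (by rw [hα_re]; positivity)
        _ = 2 ^ α.re * X ^ α.re := Real.mul_rpow (by norm_num) hX0.le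
        _ ≤ 2 * X ^ α.re := by
            have h2a : (2:ℝ) ^ α.re ≤ 2 := by
              calc (2:ℝ) ^ α.re ≤ 2 ^ (1:ℝ) :=
                    Real.rpow_le_rpow_of_exponent_le (by norm_num) (by linarith)
                _ = 2 := Real.rpow_one 2
            exact mul_le_mul_of_nonneg_right h2a (Real.rpow_nonneg hX0.le _)
    calc ‖((X + Y : ℝ) : ℂ) ^ α - (X : ℂ) ^ α‖
        ≤ ‖((X + Y : ℝ) : ℂ) ^ α‖ + ‖(X : ℂ) ^ α‖ := norm_sub_le _ _
      _ = (X + Y) ^ α.re + X ^ α.re := by rw [h1, h2]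
      _ ≤ 3 * X ^ α.re := by nlinarith [Real.rpow_nonneg hX0.le α.re]
  -- rewrite goal
  have hgoal_eq : ((X + Y : ℂ) ^ ((1 / k : ℂ) * (1 / 2 + u * Complex.I)) -
      (X : ℂ) ^ ((1 / k : ℂ) * (1 / 2 + u * Complex.I))) / (1 / 2 + u * Complex.I)
      = (((X + Y : ℝ) : ℂ) ^ α - (X : ℂ) ^ α) / s := by
    rw [hα_def, hs_def]; push_cast; ring_nf
  rw [hgoal_eq, norm_div]
  have hXpow_pos : (0 : ℝ) < X ^ ((1:ℝ) / (2 * k) - 1) := Real.rpow_pos_of_pos hX0 _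
  have hA : ‖((X + Y : ℝ) : ℂ) ^ α - (X : ℂ) ^ α‖ / ‖s‖ ≤ Y * X ^ ((1:ℝ) / (2 * k) - 1) := by
    rw [div_le_iff₀ hs_pos]
    calc ‖((X + Y : ℝ) : ℂ) ^ α - (X : ℂ) ^ α‖ ≤ ‖α‖ * X ^ (α.re - 1) * Y := hMVT
      _ = (1 / k) * ‖s‖ * X ^ ((1:ℝ) / (2 * k) - 1) * Y := by rw [hα_norm, hα_re]
      _ ≤ 1 * ‖s‖ * X ^ ((1:ℝ) / (2 * k) - 1) * Y := by
          gcongr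
          rw [div_le_one hk0]; exact hk1
      _ = Y * X ^ ((1:ℝ) / (2 * k) - 1) * ‖s‖ := by ring
  have hB : ‖((X + Y : ℝ) : ℂ) ^ α - (X : ℂ) ^ α‖ / ‖s‖
      ≤ 9 * (X ^ ((1:ℝ) / (2 * k)) / (|u| + 1)) := by
    have hu1 : (0:ℝ) < |u| + 1 := by positivity
    have h3s : |u| + 1 ≤ 3 * ‖s‖ := by linarith
    have hP : (0:ℝ) < X ^ ((1:ℝ) / (2 * k)) := Real.rpow_pos_of_pos hX0 _
    calc ‖((X + Y : ℝ) : ℂ) ^ α - (X : ℂ) ^ α‖ / ‖s‖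
        ≤ (3 * X ^ α.re) / ‖s‖ := by gcongr
      _ = (3 * X ^ ((1:ℝ) / (2 * k))) / ‖s‖ := by rw [hα_re]
      _ ≤ 9 * X ^ ((1:ℝ) / (2 * k)) / (|u| + 1) := by
          rw [div_le_div_iff₀ hs_pos hu1]; nlinarith
      _ = 9 * (X ^ ((1:ℝ) / (2 * k)) / (|u| + 1)) := mul_div_assoc _ _ _
  rcases le_total (Y * X ^ ((1:ℝ) / (2 * k) - 1)) (X ^ ((1:ℝ) / (2 * k)) / (|u| + 1)) with h | h
  · rw [min_eq_left h]
    calc _ ≤ Y * X ^ ((1:ℝ) / (2 * k) - 1) := hA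
      _ ≤ 9 * (Y * X ^ ((1:ℝ) / (2 * k) - 1)) := by nlinarith [hXpow_pos, hY]
  · rw [min_eq_right h]
    exact hB
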